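/- For ρ_i = n - i + 1/2 (1 ≤ i ≤ n), the product over 1 ≤ i < j ≤ n of (ρ_i^2 - ρ_j^2), multiplied by the product of ρ_i over 1 ≤ i ≤ n, equals 2^{-n} times the product over j from 1 to n of (2n - 2j + 1)!. -/
import Mathlib

open Nat Finset

lemma asc_aux (m : ℕ) : ∀ k, m ! * ∏ j ∈ range k, (m + 1 + j) = (m + k)!
  | 0 => by simp
  | k + 1 => by
    rw [prod_range_succ, ← mul_assoc, asc_aux m k, ← add_assoc, Nat.factorial_succ]
    ring

lemma key_nat (n : ℕ) : ∏ j ∈ range n, ((2 * n - j) * (j + 1)) = (2 * n)! := by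
  rw [prod_mul_distrib, Finset.prod_range_add_one_eq_factorial]
  have h1 : ∏ j ∈ range n, (2 * n - j) = ∏ j ∈ range n, (n + 1 + j) := by
    rw [← Finset.prod_range_reflect (fun j => n + 1 + j) n]
    apply Finset.prod_congr rfl
    intro j hj
    simp only [Finset.mem_range] at hj
    omega
  rw [h1, mul_comm, asc_aux n n, two_mul]

lemma key_q (n : ℕ) :
    ∏ j : Fin n, (((n : ℚ) + 1/2) ^ 2 - ((n : ℚ) - (j : ℕ) - 1/2) ^ 2)
      = ((2 * n)! : ℚ) := by
  have : ∏ j : Fin n, (((n : ℚ) + 1/2) ^ 2 - ((n : ℚ) - (j : ℕ) - 1/2) ^ 2)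
      = ∏ j : Fin n, (((2 * n - (j : ℕ)) * ((j : ℕ) + 1) : ℕ) : ℚ) := by
    apply Finset.prod_congr rfl
    intro j _
    have hj : (j : ℕ) < n := j.2
    have h2 : (j : ℕ) ≤ 2 * n := by omega
    push_cast [Nat.cast_sub h2]
    ring
  rw [this, Fin.prod_univ_eq_prod_range (fun j => (((2 * n - j) * (j + 1) : ℕ) : ℚ)),
    ← Nat.cast_prod, key_nat]

theorem prod_rho_so_odd (n : ℕ) :
    (∏ i : Fin n, ∏ j ∈ Finset.Ioi i,
        (((n : ℚ) - (i : ℕ) - 1/2) ^ 2 - ((n : ℚ) - (j : ℕ) - 1/2) ^ 2)) *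
      (∏ i : Fin n, ((n : ℚ) - (i : ℕ) - 1/2)) =
    (1 / 2 ^ n) * ∏ j ∈ Finset.range n, (Nat.factorial (2 * (n - 1 - j) + 1) : ℚ) := by
  induction n with
  | zero => simp
  | succ n ih =>
    -- Split off the first index from both Fin (n+1) products
    rw [Fin.prod_univ_succ, Fin.prod_univ_succ (f := fun i : Fin (n+1) =>
      (((n+1 : ℕ) : ℚ) - (i : ℕ) - 1/2))]
    rw [Fin.prod_Ioi_zero]
    have hsucc : ∀ i : Fin n,
        ∏ j ∈ Finset.Ioi i.succ,
          (((((n+1 : ℕ) : ℚ)) - ((i.succ : Fin (n+1)) : ℕ) - 1/2) ^ 2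
            - (((n+1 : ℕ) : ℚ) - (j : ℕ) - 1/2) ^ 2)
        = ∏ j ∈ Finset.Ioi i,
          (((n : ℚ) - (i : ℕ) - 1/2) ^ 2 - ((n : ℚ) - (j : ℕ) - 1/2) ^ 2) := by
      intro i
      rw [Fin.prod_Ioi_succ]
      apply Finset.prod_congr rfl
      intro j _
      have : ((i.succ : Fin (n+1)) : ℕ) = (i : ℕ) + 1 := rfl
      have hj : ((j.succ : Fin (n+1)) : ℕ) = (j : ℕ) + 1 := rfl
      rw [this, hj]
      push_cast
      ring
    rw [Finset.prod_congr rfl (fun i _ => hsucc i)]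
    have h0 : ∀ i : Fin n, (((n+1 : ℕ) : ℚ)) - ((i.succ : Fin (n+1)) : ℕ) - 1/2
        = (n : ℚ) - (i : ℕ) - 1/2 := by
      intro i
      have : ((i.succ : Fin (n+1)) : ℕ) = (i : ℕ) + 1 := rfl
      rw [this]; push_cast; ring
    rw [Finset.prod_congr rfl (fun i _ => h0 i)]
    -- first column product equals (2n)!
    have hcol : ∏ j : Fin n,
        (((((n+1 : ℕ) : ℚ)) - ((0 : Fin (n+1)) : ℕ) - 1/2) ^ 2
          - (((n+1 : ℕ) : ℚ) - ((j.succ : Fin (n+1)) : ℕ) - 1/2) ^ 2)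
        = ((2 * n)! : ℚ) := by
      rw [← key_q n]
      apply Finset.prod_congr rfl
      intro j _
      have hj : ((j.succ : Fin (n+1)) : ℕ) = (j : ℕ) + 1 := rfl
      rw [hj]
      simp only [Fin.val_zero]
      push_cast
      ring
    rw [hcol]
    -- RHS: split off j = 0
    rw [Finset.prod_range_succ']
    have hr : ∀ j ∈ Finset.range n,
        ((Nat.factorial (2 * (n + 1 - 1 - (j + 1)) + 1)) : ℚ)
          = ((Nat.factorial (2 * (n - 1 - j) + 1)) : ℚ) := by
      intro j hj
      congr 2
      omega
    rw [Finset.prod_congr rfl hr]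
    have hρ0 : (((n+1 : ℕ) : ℚ)) - ((0 : Fin (n+1)) : ℕ) - 1/2 = (n : ℚ) + 1/2 := by
      simp only [Fin.val_zero]; push_cast; ring
    rw [hρ0]
    have hfac : ((Nat.factorial (2 * (n + 1 - 1 - 0) + 1)) : ℚ)
        = (2 * (n : ℚ) + 1) * ((2 * n)! : ℚ) := by
      have : 2 * (n + 1 - 1 - 0) + 1 = 2 * n + 1 := by omega
      rw [this, Nat.factorial_succ]
      push_cast
      ring
    rw [hfac]
    -- finish using induction hypothesis
    linear_combination (((2 * n)! : ℚ) * ((n : ℚ) + 1/2)) * ih
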